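/- Fix 0 < q < 1 and consider the Markov chain M_n = max(M_{n-1}, Z_n) - 1 driven by i.i.d. Geometric(1-q) variables. For a state j, let R_j = min{n ≥ 0 : M_n = j} denote the first visit time to j. Then for every i ≥ 1, E_i[R_{i-1}] ≥ E_{i+1}[R_i], where E_t denotes expectation for the chain started at M_0 = t. -/

import Mathlib

open MeasureTheory
open scoped ENNReal

noncomputable section

/-- The chain `M_0 = m0`, `M_n = max (M_{n-1}, Z_n) - 1`. -/
def chainM (m0 : ℕ) (z : ℕ → ℕ) : ℕ → ℕ
  | 0 => m0
  | n + 1 => max (chainM m0 z n) (z (n + 1)) - 1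

/-- The first visit time `R_j = min {n ≥ 0 : M_n = j}` of a trajectory `M`, as an
element of `ℝ≥0∞` (equal to `∞` if the state `j` is never visited). -/
noncomputable def hitTime (M : ℕ → ℕ) (j : ℕ) : ℝ≥0∞ :=
  ⨅ (n : ℕ) (_ : M n = j), (n : ℝ≥0∞)

lemma chainM_succ_start_le (m0 : ℕ) (z : ℕ → ℕ) (n : ℕ) :
    chainM (m0 + 1) z n ≤ chainM m0 z n + 1 := by
  induction n with
  | zero => simp [chainM]
  | succ n ih =>
    show max (chainM (m0 + 1) z n) (z (n + 1)) - 1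
        ≤ max (chainM m0 z n) (z (n + 1)) - 1 + 1
    omega

lemma chainM_drop (m0 : ℕ) (z : ℕ → ℕ) (n : ℕ) :
    chainM m0 z n ≤ chainM m0 z (n + 1) + 1 := by
  show chainM m0 z n ≤ max (chainM m0 z n) (z (n + 1)) - 1 + 1
  omega

lemma exists_hit (f : ℕ → ℕ) (hdrop : ∀ k, f k ≤ f (k + 1) + 1) (i n : ℕ)
    (h0 : i < f 0) (hn : f n ≤ i) : ∃ m ≤ n, f m = i := by
  induction n with
  | zero => omega
  | succ n ih =>
    by_cases h : f n ≤ i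
    · obtain ⟨m, hm, he⟩ := ih h
      exact ⟨m, hm.trans (Nat.le_succ n), he⟩
    · exact ⟨n + 1, le_rfl, by have := hdrop n; omega⟩

/-- **Monotonicity of expected passage times.** For the chain
`M_n = max(M_{n-1}, Z_n) - 1` driven by i.i.d. Geometric(1-q) variables and
any `i ≥ 1`, `E_i[R_{i-1}] ≥ E_{i+1}[R_i]`. -/
theorem expected_passage_time_antitone
    {Ω : Type*} [MeasurableSpace Ω] (P : Measure Ω) [IsProbabilityMeasure P]
    (q : ℝ) (hq0 : 0 < q) (hq1 : q < 1)
    (Z : ℕ → Ω → ℕ)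
    (hmeas : ∀ i, Measurable (Z i))
    (hindep : ProbabilityTheory.iIndepFun Z P)
    (hpos : ∀ i ω, 1 ≤ Z i ω)
    (hgeom : ∀ i k, 1 ≤ k →
      P {ω | Z i ω = k} = ENNReal.ofReal ((1 - q) * q ^ (k - 1)))
    (i : ℕ) (hi : 1 ≤ i) :
    ∫⁻ ω, hitTime (chainM (i + 1) (fun n => Z n ω)) i ∂P
      ≤ ∫⁻ ω, hitTime (chainM i (fun n => Z n ω)) (i - 1) ∂P := by
  apply lintegral_mono
  intro ω
  set z : ℕ → ℕ := fun n => Z n ω with hz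
  unfold hitTime
  refine le_iInf₂ fun n hn => ?_
  have hle : chainM (i + 1) z n ≤ i := by
    have h1 := chainM_succ_start_le i z n
    have h2 : chainM i z n = i - 1 := hn
    omega
  have h0 : i < chainM (i + 1) z 0 := by simp [chainM]
  obtain ⟨m, hm, he⟩ := exists_hit (chainM (i + 1) z) (chainM_drop (i + 1) z) i n h0 hle
  calc (⨅ k, ⨅ (_ : chainM (i + 1) z k = i), (k : ℝ≥0∞))
      ≤ (m : ℝ≥0∞) := iInf_le_of_le m (iInf_le _ he)
    _ ≤ (n : ℝ≥0∞) := Nat.cast_le.mpr hm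

end
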